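/- arXiv:1304.7973 — 4 statements merged into one kernel-verified Lean document; each statement's English description precedes it below -/
import Mathlib

section
/- The Bingham normalising constant C(θ) satisfies the Euler–Darboux equations: for all 1 ≤ i < j ≤ p and all θ ∈ ℝ^p with θ_i ≠ θ_j, ∂²C/∂θ_i∂θ_j (θ) = (∂C/∂θ_i (θ) − ∂C/∂θ_j (θ)) / (2(θ_i − θ_j)). -/
open MeasureTheory

/-- The normalising constant of the Bingham distribution. -/
noncomputable def binghamC (p : ℕ) (θ : Fin p → ℝ) : ℝ :=
  ∫ x in {x : EuclideanSpace ℝ (Fin p) | ‖x‖ = 1},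
    Real.exp (∑ i, θ i * x i ^ 2) ∂ μH[(p : ℝ) - 1]

open MeasureTheory Real Finset Metric
open scoped NNReal ENNReal
set_option synthInstance.maxHeartbeats 1000000
set_option maxHeartbeats 1000000
set_option linter.unusedSectionVars false
set_option linter.unusedVariables false

noncomputable section
namespace BinghamAux

variable {p : ℕ}

abbrev Sph (p : ℕ) : Set (EuclideanSpace ℝ (Fin p)) := {x | ‖x‖ = 1}

lemma measurableSet_Sph : MeasurableSet (Sph p) :=
  (isClosed_eq continuous_norm continuous_const).measurableSet

noncomputable def μB (p : ℕ) : Measure (EuclideanSpace ℝ (Fin p)) :=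
  μH[(p : ℝ) - 1].restrict (Sph p)

lemma sum_sq_of_mem {x : EuclideanSpace ℝ (Fin p)} (hx : x ∈ Sph p) :
    ∑ k, x k ^ 2 = 1 := by
  have h : Real.sqrt (∑ k, x k ^ 2) = 1 := by
    have := EuclideanSpace.norm_eq x
    simp only [Real.norm_eq_abs, sq_abs] at this
    rw [← this]; exact hx
  have h2 := congrArg (· ^ 2) h
  simpa [Real.sq_sqrt (Finset.sum_nonneg fun k _ => sq_nonneg (x k))] using h2

lemma sq_le_one_of_mem {x : EuclideanSpace ℝ (Fin p)} (hx : x ∈ Sph p) (k : Fin p) :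
    x k ^ 2 ≤ 1 := by
  rw [← sum_sq_of_mem hx]
  exact Finset.single_le_sum (fun m _ => sq_nonneg (x m)) (Finset.mem_univ k)

lemma abs_le_one_of_mem {x : EuclideanSpace ℝ (Fin p)} (hx : x ∈ Sph p) (k : Fin p) :
    |x k| ≤ 1 := by
  have := sq_le_one_of_mem hx k
  nlinarith [abs_nonneg (x k), sq_abs (x k)]

lemma sqrt_sub_abs_le {A B c : ℝ} (hA : c ≤ A) (hB : c ≤ B) (hc : 0 < c) :
    |Real.sqrt A - Real.sqrt B| ≤ |A - B| / Real.sqrt c := by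
  have hA0 : (0:ℝ) ≤ A := hc.le.trans hA
  have hB0 : (0:ℝ) ≤ B := hc.le.trans hB
  have hsc : 0 < Real.sqrt c := Real.sqrt_pos.2 hc
  rw [le_div_iff₀ hsc]
  have h1 : Real.sqrt c ≤ Real.sqrt A + Real.sqrt B := by
    have := Real.sqrt_le_sqrt hA
    have h0 := Real.sqrt_nonneg B
    linarith
  calc |Real.sqrt A - Real.sqrt B| * Real.sqrt c
      ≤ |Real.sqrt A - Real.sqrt B| * (Real.sqrt A + Real.sqrt B) := by
        exact mul_le_mul_of_nonneg_left h1 (abs_nonneg _)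
    _ = |(Real.sqrt A - Real.sqrt B) * (Real.sqrt A + Real.sqrt B)| := by
        rw [abs_mul, abs_of_nonneg (add_nonneg (Real.sqrt_nonneg A) (Real.sqrt_nonneg B))]
    _ = |A - B| := by
        have e : (Real.sqrt A - Real.sqrt B) * (Real.sqrt A + Real.sqrt B)
            = Real.sqrt A ^ 2 - Real.sqrt B ^ 2 := by ring
        rw [e, Real.sq_sqrt hA0, Real.sq_sqrt hB0]


lemma finite_sphere (n : ℕ) :
    μH[((n+1 : ℕ) : ℝ) - 1] ({x : EuclideanSpace ℝ (Fin (n+1)) | ‖x‖ = 1}) < ⊤ := by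
  have hd : ((n+1 : ℕ) : ℝ) - 1 = (n : ℝ) := by push_cast; ring
  rw [hd]
  set c : ℝ := 1/(n+1) with hc
  have hc0 : 0 < c := by positivity
  set D : Set (Fin n → ℝ) := {y | ∑ m, y m ^ 2 ≤ 1 - c} with hD
  have hyle : ∀ y ∈ D, ∀ m, |y m| ≤ 1 := by
    intro y hy m
    have h1 : y m ^ 2 ≤ 1 := by
      have := Finset.single_le_sum (fun t (_ : t ∈ Finset.univ) => sq_nonneg (y t))
        (Finset.mem_univ m)
      have hy' : ∑ t, y t ^ 2 ≤ 1 - c := hy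
      nlinarith
    nlinarith [abs_nonneg (y m), sq_abs (y m)]
  set fm : Fin (n+1) → ℝ → (Fin n → ℝ) → EuclideanSpace ℝ (Fin (n+1)) :=
    fun k ε y => WithLp.toLp 2 (k.insertNth (ε * Real.sqrt (1 - ∑ m, y m ^ 2)) y) with hfm
  set K : ℝ≥0 := ((3*(n+1)^2 : ℕ) : ℝ≥0) with hK
  -- Lipschitz
  have hlip : ∀ (k : Fin (n+1)) (ε : ℝ), |ε| ≤ 1 → LipschitzOnWith K (fm k ε) D := by
    intro k ε hε
    apply LipschitzOnWith.of_dist_le_mul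
    intro y hy z hz
    have hdn : (0:ℝ) ≤ dist y z := dist_nonneg
    have hcomp : ∀ m, dist (y m) (z m) ≤ dist y z := fun m => dist_le_pi_dist y z m
    -- bound on the inserted coordinate
    have hA : c ≤ 1 - ∑ m, y m ^ 2 := by have : ∑ m, y m ^2 ≤ 1 - c := hy; linarith
    have hB : c ≤ 1 - ∑ m, z m ^ 2 := by have : ∑ m, z m ^2 ≤ 1 - c := hz; linarith
    have habs : |(1 - ∑ m, y m ^ 2) - (1 - ∑ m, z m ^ 2)| ≤ 2 * n * dist y z := by
      have h1 : (1 - ∑ m, y m ^ 2) - (1 - ∑ m, z m ^ 2) = ∑ m, (z m ^2 - y m ^2) := by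
        rw [Finset.sum_sub_distrib]; ring
      rw [h1]
      calc |∑ m, (z m ^2 - y m ^2)| ≤ ∑ m, |z m ^2 - y m ^2| := Finset.abs_sum_le_sum_abs _ _
        _ ≤ ∑ _m : Fin n, 2 * dist y z := by
            apply Finset.sum_le_sum
            intro m _
            have : z m ^2 - y m ^2 = (z m - y m) * (z m + y m) := by ring
            rw [this, abs_mul]
            have h2 : |z m - y m| ≤ dist y z := by
              rw [abs_sub_comm, ← Real.dist_eq]; exact hcomp m
            have h3 : |z m + y m| ≤ 2 := by
              calc |z m + y m| ≤ |z m| + |y m| := abs_add_le _ _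
                _ ≤ 2 := by linarith [hyle y hy m, hyle z hz m]
            calc |z m - y m| * |z m + y m| ≤ dist y z * 2 :=
              mul_le_mul h2 h3 (abs_nonneg _) hdn
              _ = 2 * dist y z := by ring
        _ = 2 * n * dist y z := by simp [Finset.sum_const]; ring
    have hsq : |Real.sqrt (1 - ∑ m, y m ^ 2) - Real.sqrt (1 - ∑ m, z m ^ 2)|
        ≤ 2 * n * Real.sqrt (n+1) * dist y z := by
      have h0 := sqrt_sub_abs_le hA hB hc0
      have hscpos : 0 < Real.sqrt c := Real.sqrt_pos.2 hc0
      have hsr : Real.sqrt c = 1 / Real.sqrt (n+1) := by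
        rw [hc, one_div, one_div, Real.sqrt_inv]
      have hsn : (1:ℝ) ≤ Real.sqrt (n+1) := by
        have h7 := Real.sqrt_le_sqrt (show (1:ℝ) ≤ (n:ℝ)+1 by push_cast; linarith)
        simpa using h7
      calc |Real.sqrt (1 - ∑ m, y m ^ 2) - Real.sqrt (1 - ∑ m, z m ^ 2)|
          ≤ |(1 - ∑ m, y m ^ 2) - (1 - ∑ m, z m ^ 2)| / Real.sqrt c := h0
        _ = |(1 - ∑ m, y m ^ 2) - (1 - ∑ m, z m ^ 2)| * Real.sqrt (n+1) := by
            rw [hsr]; field_simp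
        _ ≤ (2 * n * dist y z) * Real.sqrt (n+1) := by
            apply mul_le_mul_of_nonneg_right habs (Real.sqrt_nonneg _)
        _ = 2 * n * Real.sqrt (n+1) * dist y z := by ring
    -- now the euclidean distance
    rw [EuclideanSpace.dist_eq]
    have hKd : (K : ℝ) * dist y z = Real.sqrt (((K:ℝ) * dist y z)^2) := by
      rw [Real.sqrt_sq (mul_nonneg K.coe_nonneg dist_nonneg)]
    rw [hKd]
    apply Real.sqrt_le_sqrt
    rw [Fin.sum_univ_succAbove (fun t => dist (fm k ε y t) (fm k ε z t) ^ 2) k]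
    have e1 : fm k ε y k = ε * Real.sqrt (1 - ∑ m, y m ^ 2) := by
      simp [hfm, Fin.insertNth_apply_same]
    have e2 : fm k ε z k = ε * Real.sqrt (1 - ∑ m, z m ^ 2) := by
      simp [hfm, Fin.insertNth_apply_same]
    have e3 : ∀ m, fm k ε y (k.succAbove m) = y m := by
      intro m; simp [hfm, Fin.insertNth_apply_succAbove]
    have e4 : ∀ m, fm k ε z (k.succAbove m) = z m := by
      intro m; simp [hfm, Fin.insertNth_apply_succAbove]
    have hb1 : dist (fm k ε y k) (fm k ε z k) ^ 2 ≤ (2 * n * Real.sqrt (n+1) * dist y z)^2 := by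
      rw [e1, e2, Real.dist_eq]
      have : |ε * Real.sqrt (1 - ∑ m, y m ^ 2) - ε * Real.sqrt (1 - ∑ m, z m ^ 2)|
          = |ε| * |Real.sqrt (1 - ∑ m, y m ^ 2) - Real.sqrt (1 - ∑ m, z m ^ 2)| := by
        rw [← abs_mul]; ring_nf
      rw [this]
      have h5 : |ε| * |Real.sqrt (1 - ∑ m, y m ^ 2) - Real.sqrt (1 - ∑ m, z m ^ 2)|
          ≤ 2 * n * Real.sqrt (n+1) * dist y z := by
        calc |ε| * |Real.sqrt (1 - ∑ m, y m ^ 2) - Real.sqrt (1 - ∑ m, z m ^ 2)|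
            ≤ 1 * |Real.sqrt (1 - ∑ m, y m ^ 2) - Real.sqrt (1 - ∑ m, z m ^ 2)| :=
              mul_le_mul_of_nonneg_right hε (abs_nonneg _)
          _ = _ := by rw [one_mul]
          _ ≤ 2 * n * Real.sqrt (n+1) * dist y z := hsq
      have h6 : (0:ℝ) ≤ |ε| * |Real.sqrt (1 - ∑ m, y m ^ 2) - Real.sqrt (1 - ∑ m, z m ^ 2)| := by
        positivity
      nlinarith
    have hb2 : ∑ m : Fin n, dist (fm k ε y (k.succAbove m)) (fm k ε z (k.succAbove m)) ^ 2
        ≤ n * dist y z ^ 2 := by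
      calc ∑ m : Fin n, dist (fm k ε y (k.succAbove m)) (fm k ε z (k.succAbove m)) ^ 2
          = ∑ m : Fin n, dist (y m) (z m) ^ 2 := by
            apply Finset.sum_congr rfl; intro m _; rw [e3, e4]
        _ ≤ ∑ _m : Fin n, dist y z ^ 2 := by
            apply Finset.sum_le_sum; intro m _
            have := hcomp m
            nlinarith [dist_nonneg (x := y m) (y := z m)]
        _ = n * dist y z ^ 2 := by simp [Finset.sum_const, nsmul_eq_mul]
    have hKval : (K:ℝ) = 3*(n+1)^2 := by rw [hK]; push_cast; ring
    have hsq2 : Real.sqrt ((n:ℝ)+1) ^ 2 = (n:ℝ)+1 := Real.sq_sqrt (by positivity)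
    have h0n : (0:ℝ) ≤ (n:ℝ) := Nat.cast_nonneg n
    have h1 : (2*(n:ℝ)*Real.sqrt ((n:ℝ)+1)*dist y z)^2 = 4*(n:ℝ)^2*((n:ℝ)+1)*dist y z^2 := by
      rw [mul_pow, mul_pow, mul_pow, hsq2]; ring
    have hpoly : 4*(n:ℝ)^2*((n:ℝ)+1) + (n:ℝ) ≤ 9*((n:ℝ)+1)^4 := by nlinarith
    have hmul := mul_le_mul_of_nonneg_right hpoly (sq_nonneg (dist y z))
    have hKsq : ((K:ℝ) * dist y z)^2 = 9*((n:ℝ)+1)^4 * dist y z^2 := by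
      rw [hKval]; push_cast; ring
    rw [hKsq]
    rw [h1] at hb1
    linarith
  -- finite measure of each image
  have hvol : (μH[(n:ℝ)] : Measure (Fin n → ℝ)) = volume := by
    have h := MeasureTheory.hausdorffMeasure_pi_real (ι := Fin n)
    simpa using h
  have himg : ∀ (k : Fin (n+1)) (ε : ℝ), |ε| ≤ 1 → μH[(n:ℝ)] (fm k ε '' D) < ⊤ := by
    intro k ε hε
    have h1 := (hlip k ε hε).hausdorffMeasure_image_le (show (0:ℝ) ≤ (n:ℝ) from Nat.cast_nonneg n)
    have h2 : μH[(n:ℝ)] D ≤ volume (Metric.closedBall (0 : Fin n → ℝ) 1) := by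
      rw [hvol]
      apply measure_mono
      intro y hy
      rw [Metric.mem_closedBall, dist_pi_le_iff zero_le_one]
      intro m
      rw [Real.dist_eq]
      simp only [Pi.zero_apply, sub_zero]
      exact hyle y hy m
    have h3 : volume (Metric.closedBall (0 : Fin n → ℝ) 1) < ⊤ := measure_closedBall_lt_top
    calc μH[(n:ℝ)] (fm k ε '' D) ≤ (K : ℝ≥0∞) ^ (n:ℝ) * μH[(n:ℝ)] D := h1
      _ ≤ (K : ℝ≥0∞) ^ (n:ℝ) * volume (Metric.closedBall (0 : Fin n → ℝ) 1) := by
          exact mul_le_mul_right h2 _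
      _ < ⊤ := ENNReal.mul_lt_top
          (ENNReal.rpow_lt_top_of_nonneg (Nat.cast_nonneg n) ENNReal.coe_ne_top)
          h3
  -- covering
  have hcov : {x : EuclideanSpace ℝ (Fin (n+1)) | ‖x‖ = 1}
      ⊆ ⋃ k : Fin (n+1), (fm k 1 '' D ∪ fm k (-1) '' D) := by
    intro x hx
    have hsum : ∑ t, x t ^ 2 = 1 := by
      have h : Real.sqrt (∑ t, x t ^ 2) = 1 := by
        have hn := EuclideanSpace.norm_eq x
        simp only [Real.norm_eq_abs, sq_abs] at hn
        rw [← hn]; exact hx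
      have h2 := congrArg (· ^ 2) h
      simpa [Real.sq_sqrt (Finset.sum_nonneg fun t _ => sq_nonneg (x t))] using h2
    obtain ⟨k, _, hk⟩ : ∃ k ∈ Finset.univ, c ≤ x k ^ 2 := by
      apply Finset.exists_le_of_sum_le (Finset.univ_nonempty)
      rw [hsum]
      rw [Finset.sum_const]
      simp only [Finset.card_univ, Fintype.card_fin, nsmul_eq_mul, hc]
      rw [mul_one_div]
      rw [div_le_one (by positivity)]
      push_cast; linarith
    set y : Fin n → ℝ := k.removeNth x with hy
    have hym : ∀ m, y m = x (k.succAbove m) := fun m => rfl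
    have hsum2 : x k ^ 2 + ∑ m, y m ^ 2 = 1 := by
      rw [← hsum]
      exact (Fin.sum_univ_succAbove (fun t => x t ^ 2) k).symm
    have hyD : y ∈ D := by
      show ∑ m, y m ^ 2 ≤ 1 - c
      linarith
    have hrem : 1 - ∑ m, y m ^ 2 = x k ^ 2 := by linarith
    refine Set.mem_iUnion.2 ⟨k, ?_⟩
    by_cases hxk : 0 ≤ x k
    · left
      refine ⟨y, hyD, ?_⟩
      show WithLp.toLp 2 (k.insertNth (1 * Real.sqrt (1 - ∑ m, y m ^ 2)) y) = x
      rw [hrem, one_mul, Real.sqrt_sq hxk, hy]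
      exact congrArg (WithLp.toLp 2) (Fin.insertNth_self_removeNth k x.ofLp)
    · right
      refine ⟨y, hyD, ?_⟩
      show WithLp.toLp 2 (k.insertNth (-1 * Real.sqrt (1 - ∑ m, y m ^ 2)) y) = x
      push_neg at hxk
      have hs : Real.sqrt (x k ^ 2) = -x k := by
        rw [Real.sqrt_sq_eq_abs, abs_of_neg hxk]
      rw [hrem, hs, neg_one_mul, neg_neg, hy]
      exact congrArg (WithLp.toLp 2) (Fin.insertNth_self_removeNth k x.ofLp)
  calc μH[(n:ℝ)] {x : EuclideanSpace ℝ (Fin (n+1)) | ‖x‖ = 1}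
      ≤ μH[(n:ℝ)] (⋃ k : Fin (n+1), (fm k 1 '' D ∪ fm k (-1) '' D)) := measure_mono hcov
    _ ≤ ∑' k : Fin (n+1), μH[(n:ℝ)] (fm k 1 '' D ∪ fm k (-1) '' D) := measure_iUnion_le _
    _ < ⊤ := by
        rw [tsum_fintype]
        apply ENNReal.sum_lt_top.2
        intro k _
        calc μH[(n:ℝ)] (fm k 1 '' D ∪ fm k (-1) '' D)
            ≤ μH[(n:ℝ)] (fm k 1 '' D) + μH[(n:ℝ)] (fm k (-1) '' D) := measure_union_le _ _
          _ < ⊤ := ENNReal.add_lt_top.2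
              ⟨himg k 1 (by norm_num), himg k (-1) (by norm_num)⟩


lemma sum_split {i j : Fin p} (hij : i ≠ j) (g : Fin p → ℝ) :
    ∑ k, g k = g i + g j + ∑ k ∈ (Finset.univ.erase i).erase j, g k := by
  have hj : j ∈ Finset.univ.erase i := Finset.mem_erase.2 ⟨hij.symm, Finset.mem_univ j⟩
  have h1 : ∑ k, g k = g i + ∑ k ∈ Finset.univ.erase i, g k :=
    (Finset.add_sum_erase _ g (Finset.mem_univ i)).symm
  have h2 : ∑ k ∈ Finset.univ.erase i, g k
      = g j + ∑ k ∈ (Finset.univ.erase i).erase j, g k :=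
    (Finset.add_sum_erase _ g hj).symm
  rw [h1, h2]; ring

def rotMap (i j : Fin p) (cs sn : ℝ) (x : EuclideanSpace ℝ (Fin p)) :
    EuclideanSpace ℝ (Fin p) :=
  WithLp.toLp 2 fun k => if k = i then cs * x i + sn * x j
    else if k = j then -sn * x i + cs * x j else x k

variable {i j : Fin p}

lemma rotMap_apply_i (cs sn : ℝ) (x : EuclideanSpace ℝ (Fin p)) :
    rotMap i j cs sn x i = cs * x i + sn * x j := by simp [rotMap]

lemma rotMap_apply_j (hij : i ≠ j) (cs sn : ℝ) (x : EuclideanSpace ℝ (Fin p)) :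
    rotMap i j cs sn x j = -sn * x i + cs * x j := by
  simp [rotMap, hij.symm]

lemma rotMap_apply_other (cs sn : ℝ) (x : EuclideanSpace ℝ (Fin p)) {k : Fin p}
    (hk : k ≠ i) (hk' : k ≠ j) : rotMap i j cs sn x k = x k := by
  simp [rotMap, hk, hk']

noncomputable def rotEquiv (i j : Fin p) (hij : i ≠ j) (cs sn : ℝ) (h : cs^2 + sn^2 = 1) :
    EuclideanSpace ℝ (Fin p) ≃ᵢ EuclideanSpace ℝ (Fin p) where
  toFun := rotMap i j cs sn
  invFun := rotMap i j cs (-sn)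
  left_inv := by
    intro x
    ext k
    by_cases hk : k = i
    · subst hk
      rw [rotMap_apply_i, rotMap_apply_i, rotMap_apply_j hij]
      linear_combination x k * h
    · by_cases hk' : k = j
      · subst hk'
        rw [rotMap_apply_j hij, rotMap_apply_i, rotMap_apply_j hij]
        linear_combination x k * h
      · rw [rotMap_apply_other cs (-sn) _ hk hk', rotMap_apply_other cs sn _ hk hk']
  right_inv := by
    intro x
    ext k
    by_cases hk : k = i
    · subst hk
      rw [rotMap_apply_i, rotMap_apply_i, rotMap_apply_j hij]
      linear_combination x k * h
    · by_cases hk' : k = j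
      · subst hk'
        rw [rotMap_apply_j hij, rotMap_apply_i, rotMap_apply_j hij]
        linear_combination x k * h
      · rw [rotMap_apply_other cs sn _ hk hk', rotMap_apply_other cs (-sn) _ hk hk']
  isometry_toFun := by
    apply Isometry.of_dist_eq
    intro x y
    rw [EuclideanSpace.dist_eq, EuclideanSpace.dist_eq]
    congr 1
    rw [sum_split hij (fun k => dist (rotMap i j cs sn x k) (rotMap i j cs sn y k) ^ 2),
      sum_split hij (fun k => dist (x k) (y k) ^ 2)]
    have hi' : dist (rotMap i j cs sn x i) (rotMap i j cs sn y i) ^ 2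
        + dist (rotMap i j cs sn x j) (rotMap i j cs sn y j) ^ 2
        = dist (x i) (y i) ^ 2 + dist (x j) (y j) ^ 2 := by
      rw [rotMap_apply_i, rotMap_apply_i, rotMap_apply_j hij, rotMap_apply_j hij,
        Real.dist_eq, Real.dist_eq, Real.dist_eq, Real.dist_eq, sq_abs, sq_abs, sq_abs, sq_abs]
      linear_combination ((x i - y i)^2 + (x j - y j)^2) * h
    have hrest : ∑ k ∈ (Finset.univ.erase i).erase j,
        dist (rotMap i j cs sn x k) (rotMap i j cs sn y k) ^ 2
        = ∑ k ∈ (Finset.univ.erase i).erase j, dist (x k) (y k) ^ 2 := by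
      apply Finset.sum_congr rfl
      intro k hk
      have hk1 : k ≠ j := (Finset.mem_erase.1 hk).1
      have hk2 : k ≠ i := (Finset.mem_erase.1 (Finset.mem_erase.1 hk).2).1
      rw [rotMap_apply_other cs sn _ hk2 hk1, rotMap_apply_other cs sn _ hk2 hk1]
    rw [hrest]
    linarith

lemma rotEquiv_apply (hij : i ≠ j) (cs sn : ℝ) (h : cs^2 + sn^2 = 1)
    (x : EuclideanSpace ℝ (Fin p)) : rotEquiv i j hij cs sn h x = rotMap i j cs sn x := rfl

noncomputable def reflEquiv (i : Fin p) :
    EuclideanSpace ℝ (Fin p) ≃ᵢ EuclideanSpace ℝ (Fin p) where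
  toFun := fun x => WithLp.toLp 2 fun k => if k = i then -x i else x k
  invFun := fun x => WithLp.toLp 2 fun k => if k = i then -x i else x k
  left_inv := by
    intro x; ext k
    by_cases hk : k = i
    · subst hk; simp
    · simp [hk]
  right_inv := by
    intro x; ext k
    by_cases hk : k = i
    · subst hk; simp
    · simp [hk]
  isometry_toFun := by
    apply Isometry.of_dist_eq
    intro x y
    rw [EuclideanSpace.dist_eq, EuclideanSpace.dist_eq]
    congr 1
    apply Finset.sum_congr rfl
    intro k _
    by_cases hk : k = i
    · subst hk
      show dist (if k = k then -x k else x k) (if k = k then -y k else y k) ^ 2 = _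
      rw [if_pos rfl, if_pos rfl, dist_neg_neg]
    · show dist (if k = i then -x i else x k) (if k = i then -y i else y k) ^ 2 = _
      rw [if_neg hk, if_neg hk]

lemma reflEquiv_apply (i : Fin p) (x : EuclideanSpace ℝ (Fin p)) (k : Fin p) :
    reflEquiv i x k = if k = i then -x i else x k := rfl

lemma norm_eq_sqrt_sum_sq (x : EuclideanSpace ℝ (Fin p)) :
    ‖x‖ = Real.sqrt (∑ k, x k ^ 2) := by
  have hn := EuclideanSpace.norm_eq x
  simpa [Real.norm_eq_abs, sq_abs] using hn

lemma measurePreserving_of_norm (T : EuclideanSpace ℝ (Fin p) ≃ᵢ EuclideanSpace ℝ (Fin p))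
    (hT : ∀ x, ‖T x‖ = ‖x‖) : MeasurePreserving T (μB p) (μB p) := by
  refine ⟨T.isometry.continuous.measurable, ?_⟩
  have h1 : Measure.map T μH[(p:ℝ)-1] = μH[(p:ℝ)-1] := T.map_hausdorffMeasure _
  have hpre : T ⁻¹' (Sph p) = Sph p := by
    ext x
    simp only [Set.mem_preimage, Sph, Set.mem_setOf_eq, hT x]
  calc Measure.map T (μB p)
      = Measure.map T (μH[(p:ℝ)-1].restrict (T ⁻¹' Sph p)) := by rw [hpre]; rfl
    _ = (Measure.map T μH[(p:ℝ)-1]).restrict (Sph p) :=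
        (Measure.restrict_map T.isometry.continuous.measurable measurableSet_Sph).symm
    _ = μB p := by rw [h1]; rfl

lemma integral_comp_isoEquiv (T : EuclideanSpace ℝ (Fin p) ≃ᵢ EuclideanSpace ℝ (Fin p))
    (hT : ∀ x, ‖T x‖ = ‖x‖) (G : EuclideanSpace ℝ (Fin p) → ℝ) :
    ∫ x, G (T x) ∂(μB p) = ∫ x, G x ∂(μB p) :=
  (measurePreserving_of_norm T hT).integral_comp T.toHomeomorph.measurableEmbedding G


lemma ae_sph : ∀ᵐ x ∂(μB p), x ∈ Sph p := by
  rw [μB]; exact ae_restrict_mem measurableSet_Sph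

/-- The continuous linear map `v ↦ ∑ k, x k ^ 2 * v k`. -/
def ell (x : EuclideanSpace ℝ (Fin p)) : (Fin p → ℝ) →L[ℝ] ℝ :=
  ∑ k, (x k ^ 2) • (ContinuousLinearMap.proj k : (Fin p → ℝ) →L[ℝ] ℝ)

lemma ell_apply (x : EuclideanSpace ℝ (Fin p)) (v : Fin p → ℝ) :
    ell x v = ∑ k, x k ^ 2 * v k := by
  simp [ell, ContinuousLinearMap.sum_apply, ContinuousLinearMap.smul_apply,
    ContinuousLinearMap.proj_apply, smul_eq_mul]

lemma ell_single (x : EuclideanSpace ℝ (Fin p)) (j : Fin p) :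
    ell x (Pi.single j 1) = x j ^ 2 := by
  rw [ell_apply]
  rw [Finset.sum_eq_single j]
  · simp
  · intro k _ hk; simp [Pi.single_apply, hk]
  · intro h; exact absurd (Finset.mem_univ j) h

lemma norm_ell_le (x : EuclideanSpace ℝ (Fin p)) : ‖ell x‖ ≤ ∑ k, x k ^ 2 := by
  apply ContinuousLinearMap.opNorm_le_bound _ (Finset.sum_nonneg fun k _ => sq_nonneg _)
  intro v
  rw [ell_apply]
  calc ‖∑ k, x k ^ 2 * v k‖ ≤ ∑ k, ‖x k ^ 2 * v k‖ := norm_sum_le _ _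
    _ ≤ ∑ k, x k ^ 2 * ‖v‖ := by
        apply Finset.sum_le_sum
        intro k _
        rw [norm_mul, Real.norm_eq_abs (x k ^2), abs_of_nonneg (sq_nonneg _)]
        exact mul_le_mul_of_nonneg_left (norm_le_pi_norm v k) (sq_nonneg _)
    _ = (∑ k, x k ^ 2) * ‖v‖ := by rw [Finset.sum_mul]

lemma continuous_coord (k : Fin p) : Continuous (fun x : EuclideanSpace ℝ (Fin p) => x k) := by
  exact (continuous_apply k).comp (PiLp.continuous_ofLp 2 fun _ : Fin p => ℝ)

lemma continuous_ell : Continuous (fun x : EuclideanSpace ℝ (Fin p) => ell x) := by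
  apply continuous_finset_sum
  intro k _
  exact (((continuous_coord k).pow 2).smul continuous_const)

lemma ell_le_of_mem {x : EuclideanSpace ℝ (Fin p)} (hx : x ∈ Sph p) (t : Fin p → ℝ) :
    ell x t ≤ ∑ k, |t k| := by
  rw [ell_apply]
  apply Finset.sum_le_sum
  intro k _
  calc x k ^ 2 * t k ≤ |x k ^ 2 * t k| := le_abs_self _
    _ = x k ^ 2 * |t k| := by rw [abs_mul, abs_of_nonneg (sq_nonneg _)]
    _ ≤ 1 * |t k| := mul_le_mul_of_nonneg_right (sq_le_one_of_mem hx k) (abs_nonneg _)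
    _ = |t k| := one_mul _

/-- integrability of bounded a.e.-measurable functions against `μB`. -/
lemma integrable_of_bound [IsFiniteMeasure (μB p)] {G : Type*} [NormedAddCommGroup G]
    (g : EuclideanSpace ℝ (Fin p) → G) (hg : Continuous g) (C : ℝ)
    (hb : ∀ x ∈ Sph p, ‖g x‖ ≤ C) : Integrable g (μB p) := by
  apply Integrable.mono' (integrable_const C) hg.aestronglyMeasurable
  exact ae_sph.mono fun x hx => hb x hx

variable [IsFiniteMeasure (μB p)]

lemma hasFDerivAt_param (c : EuclideanSpace ℝ (Fin p) → ℝ) (hc : Continuous c)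
    (hb : ∀ x ∈ Sph p, |c x| ≤ 1) (t₀ : Fin p → ℝ) :
    HasFDerivAt (fun t => ∫ x, c x * Real.exp (ell x t) ∂(μB p))
      (∫ x, (c x * Real.exp (ell x t₀)) • ell x ∂(μB p)) t₀ := by
  set B : ℝ := ∑ k, (|t₀ k| + 1) with hB
  have hBle : ∀ t ∈ ball t₀ 1, ∀ x ∈ Sph p, ell x t ≤ B := by
    intro t ht x hx
    calc ell x t ≤ ∑ k, |t k| := ell_le_of_mem hx t
      _ ≤ B := by
        apply Finset.sum_le_sum
        intro k _
        have h1 : |t k - t₀ k| ≤ ‖t - t₀‖ := by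
          have := norm_le_pi_norm (t - t₀) k
          simpa [Real.norm_eq_abs] using this
        have h2 : ‖t - t₀‖ < 1 := by rwa [← dist_eq_norm, ← mem_ball]
        calc |t k| = |t₀ k + (t k - t₀ k)| := by ring_nf
          _ ≤ |t₀ k| + |t k - t₀ k| := abs_add_le _ _
          _ ≤ |t₀ k| + 1 := by linarith
  have hexpB : ∀ t ∈ ball t₀ 1, ∀ x ∈ Sph p, Real.exp (ell x t) ≤ Real.exp B :=
    fun t ht x hx => Real.exp_le_exp.2 (hBle t ht x hx)
  have hcont : ∀ t : Fin p → ℝ, Continuous (fun x => c x * Real.exp (ell x t)) := by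
    intro t
    exact hc.mul ((continuous_ell.clm_apply continuous_const).rexp)
  have hcont' : ∀ t : Fin p → ℝ,
      Continuous (fun x => (c x * Real.exp (ell x t)) • ell x) := by
    intro t
    exact (hcont t).smul continuous_ell
  refine hasFDerivAt_integral_of_dominated_of_fderiv_le (𝕜 := ℝ) (μ := μB p)
    (F := fun t x => c x * Real.exp (ell x t))
    (F' := fun t x => (c x * Real.exp (ell x t)) • ell x)
    (bound := fun _ => Real.exp B) (ball_mem_nhds t₀ one_pos) ?_ ?_ ?_ ?_ ?_ ?_
  · exact Filter.Eventually.of_forall fun t => (hcont t).aestronglyMeasurable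
  · apply integrable_of_bound _ (hcont t₀) (Real.exp B)
    intro x hx
    rw [Real.norm_eq_abs, abs_mul, abs_of_nonneg (Real.exp_nonneg _)]
    calc |c x| * Real.exp (ell x t₀)
        ≤ 1 * Real.exp B := by
          exact mul_le_mul (hb x hx) (hexpB t₀ (mem_ball_self one_pos) x hx)
            (Real.exp_nonneg _) zero_le_one
      _ = Real.exp B := one_mul _
  · exact (hcont' t₀).aestronglyMeasurable
  · apply ae_sph.mono
    intro x hx t ht
    show ‖(c x * Real.exp (ell x t)) • ell x‖ ≤ Real.exp B
    apply le_trans (ContinuousLinearMap.opNorm_smul_le _ _)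
    have h1 : ‖c x * Real.exp (ell x t)‖ ≤ Real.exp B := by
      rw [norm_mul, Real.norm_eq_abs, Real.norm_eq_abs,
        abs_of_nonneg (Real.exp_nonneg _)]
      calc |c x| * Real.exp (ell x t)
          ≤ 1 * Real.exp B := by
            exact mul_le_mul (hb x hx) (hexpB t ht x hx) (Real.exp_nonneg _) zero_le_one
        _ = Real.exp B := one_mul _
    have h2 : ‖ell x‖ ≤ 1 := by
      calc ‖ell x‖ ≤ ∑ k, x k ^ 2 := norm_ell_le x
        _ = 1 := sum_sq_of_mem hx
    calc ‖c x * Real.exp (ell x t)‖ * ‖ell x‖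
        ≤ Real.exp B * 1 := mul_le_mul h1 h2 (norm_nonneg _) (Real.exp_nonneg _)
      _ = Real.exp B := mul_one _
  · exact integrable_const _
  · apply Filter.Eventually.of_forall
    intro x t _
    have h := (((ell x).hasFDerivAt (x := t)).exp).const_mul (c x)
    rw [← smul_smul]; exact h

lemma integrable_FD (c : EuclideanSpace ℝ (Fin p) → ℝ) (hc : Continuous c)
    (hb : ∀ x ∈ Sph p, |c x| ≤ 1) (t₀ : Fin p → ℝ) :
    Integrable (fun x => (c x * Real.exp (ell x t₀)) • ell x) (μB p) := by
  refine integrable_of_bound (fun x => (c x * Real.exp (ell x t₀)) • ell x)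
    ((hc.mul ((continuous_ell.clm_apply continuous_const).rexp)).smul continuous_ell)
    (Real.exp (∑ k, |t₀ k|)) ?_
  intro x hx
  show ‖(c x * Real.exp (ell x t₀)) • ell x‖ ≤ Real.exp (∑ k, |t₀ k|)
  apply le_trans (ContinuousLinearMap.opNorm_smul_le _ _)
  rw [norm_mul, Real.norm_eq_abs, Real.norm_eq_abs,
    abs_of_nonneg (Real.exp_nonneg _)]
  have h2 : ‖ell x‖ ≤ 1 := by
    calc ‖ell x‖ ≤ ∑ k, x k ^ 2 := norm_ell_le x
      _ = 1 := sum_sq_of_mem hx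
  have h1 : |c x| * Real.exp (ell x t₀) ≤ Real.exp (∑ k, |t₀ k|) := by
    calc |c x| * Real.exp (ell x t₀)
        ≤ 1 * Real.exp (∑ k, |t₀ k|) := by
          exact mul_le_mul (hb x hx) (Real.exp_le_exp.2 (ell_le_of_mem hx t₀))
            (Real.exp_nonneg _) zero_le_one
      _ = _ := one_mul _
  calc |c x| * Real.exp (ell x t₀) * ‖ell x‖
      ≤ Real.exp (∑ k, |t₀ k|) * 1 := mul_le_mul h1 h2 (norm_nonneg _) (Real.exp_nonneg _)
    _ = _ := mul_one _

lemma fderiv_param_single (c : EuclideanSpace ℝ (Fin p) → ℝ) (hc : Continuous c)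
    (hb : ∀ x ∈ Sph p, |c x| ≤ 1) (t₀ : Fin p → ℝ) (j : Fin p) :
    fderiv ℝ (fun t => ∫ x, c x * Real.exp (ell x t) ∂(μB p)) t₀ (Pi.single j 1)
      = ∫ x, c x * Real.exp (ell x t₀) * x j ^ 2 ∂(μB p) := by
  rw [(hasFDerivAt_param c hc hb t₀).fderiv]
  rw [ContinuousLinearMap.integral_apply (integrable_FD c hc hb t₀)]
  congr 1
  funext x
  rw [ContinuousLinearMap.smul_apply, ell_single, smul_eq_mul]


-- ### new material

def uu (i j : Fin p) (x : EuclideanSpace ℝ (Fin p)) (φ : ℝ) : ℝ :=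
  Real.cos φ * x i + Real.sin φ * x j

def vv (i j : Fin p) (x : EuclideanSpace ℝ (Fin p)) (φ : ℝ) : ℝ :=
  -Real.sin φ * x i + Real.cos φ * x j

def ffq (θ : Fin p → ℝ) (i j : Fin p) (x : EuclideanSpace ℝ (Fin p)) (φ : ℝ) : ℝ :=
  (ell x θ - θ i * x i ^ 2 - θ j * x j ^ 2) + θ i * (uu i j x φ)^2 + θ j * (vv i j x φ)^2

lemma uu_zero (x : EuclideanSpace ℝ (Fin p)) : uu i j x 0 = x i := by simp [uu]
lemma vv_zero (x : EuclideanSpace ℝ (Fin p)) : vv i j x 0 = x j := by simp [vv]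
lemma ffq_zero (θ : Fin p → ℝ) (x : EuclideanSpace ℝ (Fin p)) :
    ffq θ i j x 0 = ell x θ := by
  rw [ffq, uu_zero, vv_zero]; ring

lemma rot_sum_sq (hij : i ≠ j) {cs sn : ℝ} (h : cs^2 + sn^2 = 1)
    (x : EuclideanSpace ℝ (Fin p)) (w : Fin p → ℝ) :
    ∑ k, rotMap i j cs sn x k ^ 2 * w k
      = ∑ k, x k ^ 2 * w k - w i * x i ^ 2 - w j * x j ^ 2
        + w i * (cs * x i + sn * x j)^2 + w j * (-sn * x i + cs * x j)^2 := by
  rw [sum_split hij (fun k => rotMap i j cs sn x k ^ 2 * w k),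
    sum_split hij (fun k => x k ^ 2 * w k)]
  have hrest : ∑ k ∈ (Finset.univ.erase i).erase j, rotMap i j cs sn x k ^ 2 * w k
      = ∑ k ∈ (Finset.univ.erase i).erase j, x k ^ 2 * w k := by
    apply Finset.sum_congr rfl
    intro k hk
    have hk1 : k ≠ j := (Finset.mem_erase.1 hk).1
    have hk2 : k ≠ i := (Finset.mem_erase.1 (Finset.mem_erase.1 hk).2).1
    rw [rotMap_apply_other cs sn x hk2 hk1]
  rw [hrest, rotMap_apply_i, rotMap_apply_j hij]
  ring

lemma rot_norm (hij : i ≠ j) {cs sn : ℝ} (h : cs^2 + sn^2 = 1)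
    (x : EuclideanSpace ℝ (Fin p)) :
    ‖rotEquiv i j hij cs sn h x‖ = ‖x‖ := by
  rw [norm_eq_sqrt_sum_sq, norm_eq_sqrt_sum_sq]
  congr 1
  have h1 : ∀ k, rotEquiv i j hij cs sn h x k ^ 2
      = rotMap i j cs sn x k ^ 2 * (fun _ => (1:ℝ)) k := by
    intro k; rw [rotEquiv_apply]; ring
  calc ∑ k, rotEquiv i j hij cs sn h x k ^ 2
      = ∑ k, rotMap i j cs sn x k ^ 2 * (fun _ => (1:ℝ)) k :=
        Finset.sum_congr rfl fun k _ => h1 k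
    _ = ∑ k, x k ^ 2 * (fun _ => (1:ℝ)) k - 1 * x i ^ 2 - 1 * x j ^ 2
        + 1 * (cs * x i + sn * x j)^2 + 1 * (-sn * x i + cs * x j)^2 := rot_sum_sq hij h x _
    _ = ∑ k, x k ^ 2 := by
        simp only [mul_one, one_mul]
        have : (cs * x i + sn * x j)^2 + (-sn * x i + cs * x j)^2 = x i ^2 + x j ^2 := by
          linear_combination (x i ^ 2 + x j ^ 2) * h
        linarith

lemma ell_rot (hij : i ≠ j) {cs sn : ℝ} (h : cs^2 + sn^2 = 1) (θ : Fin p → ℝ)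
    (x : EuclideanSpace ℝ (Fin p)) :
    ell (rotMap i j cs sn x) θ
      = (ell x θ - θ i * x i ^ 2 - θ j * x j ^ 2)
        + θ i * (cs * x i + sn * x j)^2 + θ j * (-sn * x i + cs * x j)^2 := by
  rw [ell_apply, ell_apply, rot_sum_sq hij h x θ]

lemma refl_norm (i : Fin p) (x : EuclideanSpace ℝ (Fin p)) :
    ‖reflEquiv i x‖ = ‖x‖ := by
  rw [norm_eq_sqrt_sum_sq, norm_eq_sqrt_sum_sq]
  congr 1
  apply Finset.sum_congr rfl
  intro k _
  rw [reflEquiv_apply]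
  by_cases hk : k = i
  · subst hk; rw [if_pos rfl]; ring
  · rw [if_neg hk]

lemma ell_refl (i : Fin p) (θ : Fin p → ℝ) (x : EuclideanSpace ℝ (Fin p)) :
    ell (reflEquiv i x) θ = ell x θ := by
  rw [ell_apply, ell_apply]
  apply Finset.sum_congr rfl
  intro k _
  rw [reflEquiv_apply]
  by_cases hk : k = i
  · subst hk; rw [if_pos rfl]; ring
  · rw [if_neg hk]

variable [IsFiniteMeasure (μB p)]

lemma integral_G_zero (hij : i ≠ j) (θ : Fin p → ℝ) (Δ : ℝ) :
    ∫ y, 2*Δ*(y i * y j) * Real.exp (ell y θ) ∂(μB p) = 0 := by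
  set G : EuclideanSpace ℝ (Fin p) → ℝ :=
    fun y => 2*Δ*(y i * y j) * Real.exp (ell y θ) with hG
  have h1 : ∫ y, G (reflEquiv i y) ∂(μB p) = ∫ y, G y ∂(μB p) :=
    integral_comp_isoEquiv _ (refl_norm i) G
  have h2 : ∀ y, G (reflEquiv i y) = -G y := by
    intro y
    rw [hG]
    simp only
    rw [ell_refl, reflEquiv_apply, reflEquiv_apply, if_pos rfl, if_neg hij.symm]
    ring
  have h3 : ∫ y, G (reflEquiv i y) ∂(μB p) = -∫ y, G y ∂(μB p) := by
    rw [show (fun y => G (reflEquiv i y)) = fun y => -G y from funext h2]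
    exact integral_neg G
  have := h1.symm.trans h3
  linarith

/-- the function `φ ↦ ∫ Q x φ` is identically zero. -/
lemma integral_Q_zero (hij : i ≠ j) (θ : Fin p → ℝ) (φ : ℝ) :
    ∫ x, 2*(θ i - θ j)*(uu i j x φ * vv i j x φ) * Real.exp (ffq θ i j x φ) ∂(μB p) = 0 := by
  have h : Real.cos φ ^ 2 + Real.sin φ ^ 2 = 1 := Real.cos_sq_add_sin_sq φ
  set T := rotEquiv i j hij (Real.cos φ) (Real.sin φ) h with hT
  set G : EuclideanSpace ℝ (Fin p) → ℝ :=
    fun y => 2*(θ i - θ j)*(y i * y j) * Real.exp (ell y θ) with hG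
  have key : ∀ x, 2*(θ i - θ j)*(uu i j x φ * vv i j x φ) * Real.exp (ffq θ i j x φ)
      = G (T x) := by
    intro x
    rw [hG]
    simp only
    rw [hT, rotEquiv_apply, rotMap_apply_i, rotMap_apply_j hij, ell_rot hij h θ x]
    rw [ffq, uu, vv]
  rw [show (fun x => 2*(θ i - θ j)*(uu i j x φ * vv i j x φ) * Real.exp (ffq θ i j x φ))
      = fun x => G (T x) from funext key]
  rw [integral_comp_isoEquiv T (rot_norm hij h) G]
  exact integral_G_zero hij θ _


def QD (θ : Fin p → ℝ) (i j : Fin p) (x : EuclideanSpace ℝ (Fin p)) (φ : ℝ) : ℝ :=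
  (2*(θ i - θ j)*((vv i j x φ)^2 - (uu i j x φ)^2)
    + (2*(θ i - θ j)*(uu i j x φ * vv i j x φ))^2) * Real.exp (ffq θ i j x φ)

lemma hasDerivAt_Q (θ : Fin p → ℝ) (x : EuclideanSpace ℝ (Fin p)) (φ : ℝ) :
    HasDerivAt (fun s => 2*(θ i - θ j)*(uu i j x s * vv i j x s) * Real.exp (ffq θ i j x s))
      (QD θ i j x φ) φ := by
  have hu : HasDerivAt (fun s => uu i j x s) (vv i j x φ) φ := by
    have h3 := ((Real.hasDerivAt_cos φ).mul_const (x i)).add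
      ((Real.hasDerivAt_sin φ).mul_const (x j))
    exact h3
  have hv : HasDerivAt (fun s => vv i j x s) (-(uu i j x φ)) φ := by
    have h3 := (((Real.hasDerivAt_sin φ).neg).mul_const (x i)).add
      ((Real.hasDerivAt_cos φ).mul_const (x j))
    exact h3.congr_deriv (by rw [uu]; ring)
  have hu2 := (hu.pow 2).const_mul (θ i)
  have hv2 := (hv.pow 2).const_mul (θ j)
  have hC : HasDerivAt (fun _ : ℝ => ell x θ - θ i * x i ^ 2 - θ j * x j ^ 2) 0 φ :=
    hasDerivAt_const _ _
  have hf : HasDerivAt (fun s => ffq θ i j x s)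
      (0 + θ i * (2 * uu i j x φ ^ 1 * vv i j x φ)
        + θ j * (2 * vv i j x φ ^ 1 * -(uu i j x φ))) φ := by
    exact (hC.add hu2).add hv2
  have hprod := ((hu.mul hv).const_mul (2*(θ i - θ j))).mul hf.exp
  exact hprod.congr_deriv (by rw [QD, Pi.mul_apply]; ring)

lemma continuous_uu (φ : ℝ) : Continuous (fun x : EuclideanSpace ℝ (Fin p) => uu i j x φ) :=
  (continuous_const.mul (continuous_coord i)).add (continuous_const.mul (continuous_coord j))

lemma continuous_vv (φ : ℝ) : Continuous (fun x : EuclideanSpace ℝ (Fin p) => vv i j x φ) :=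
  (continuous_const.mul (continuous_coord i)).add (continuous_const.mul (continuous_coord j))

lemma continuous_ffq (θ : Fin p → ℝ) (φ : ℝ) :
    Continuous (fun x : EuclideanSpace ℝ (Fin p) => ffq θ i j x φ) := by
  apply Continuous.add
  apply Continuous.add
  · exact ((continuous_ell.clm_apply continuous_const).sub
      (continuous_const.mul ((continuous_coord i).pow 2))).sub
      (continuous_const.mul ((continuous_coord j).pow 2))
  · exact continuous_const.mul ((continuous_uu φ).pow 2)
  · exact continuous_const.mul ((continuous_vv φ).pow 2)

lemma continuous_Q (θ : Fin p → ℝ) (φ : ℝ) :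
    Continuous (fun x : EuclideanSpace ℝ (Fin p) =>
      2*(θ i - θ j)*(uu i j x φ * vv i j x φ) * Real.exp (ffq θ i j x φ)) :=
  (continuous_const.mul ((continuous_uu φ).mul (continuous_vv φ))).mul
    (continuous_ffq θ φ).rexp

lemma continuous_QD (θ : Fin p → ℝ) (φ : ℝ) :
    Continuous (fun x : EuclideanSpace ℝ (Fin p) => QD θ i j x φ) := by
  apply Continuous.mul _ (continuous_ffq θ φ).rexp
  apply Continuous.add
  · exact continuous_const.mul (((continuous_vv φ).pow 2).sub ((continuous_uu φ).pow 2))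
  · exact (continuous_const.mul ((continuous_uu φ).mul (continuous_vv φ))).pow 2

lemma abs_uu_le {x : EuclideanSpace ℝ (Fin p)} (hx : x ∈ Sph p) (φ : ℝ) :
    |uu i j x φ| ≤ 2 := by
  rw [uu]
  calc |Real.cos φ * x i + Real.sin φ * x j| ≤ |Real.cos φ * x i| + |Real.sin φ * x j| :=
        abs_add_le _ _
    _ ≤ 1 + 1 := by
        apply add_le_add
        · rw [abs_mul]
          calc |Real.cos φ| * |x i| ≤ 1 * 1 :=
              mul_le_mul (Real.abs_cos_le_one φ) (abs_le_one_of_mem hx i) (abs_nonneg _)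
                zero_le_one
            _ = 1 := one_mul _
        · rw [abs_mul]
          calc |Real.sin φ| * |x j| ≤ 1 * 1 :=
              mul_le_mul (Real.abs_sin_le_one φ) (abs_le_one_of_mem hx j) (abs_nonneg _)
                zero_le_one
            _ = 1 := one_mul _
    _ = 2 := by norm_num

lemma abs_vv_le {x : EuclideanSpace ℝ (Fin p)} (hx : x ∈ Sph p) (φ : ℝ) :
    |vv i j x φ| ≤ 2 := by
  rw [vv]
  calc |-Real.sin φ * x i + Real.cos φ * x j| ≤ |-Real.sin φ * x i| + |Real.cos φ * x j| :=
        abs_add_le _ _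
    _ ≤ 1 + 1 := by
        apply add_le_add
        · rw [abs_mul, abs_neg]
          calc |Real.sin φ| * |x i| ≤ 1 * 1 :=
              mul_le_mul (Real.abs_sin_le_one φ) (abs_le_one_of_mem hx i) (abs_nonneg _)
                zero_le_one
            _ = 1 := one_mul _
        · rw [abs_mul]
          calc |Real.cos φ| * |x j| ≤ 1 * 1 :=
              mul_le_mul (Real.abs_cos_le_one φ) (abs_le_one_of_mem hx j) (abs_nonneg _)
                zero_le_one
            _ = 1 := one_mul _
    _ = 2 := by norm_num

lemma ffq_le {θ : Fin p → ℝ} {x : EuclideanSpace ℝ (Fin p)} (hx : x ∈ Sph p) (φ : ℝ) :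
    ffq θ i j x φ ≤ (∑ k, |θ k|) + 5*|θ i| + 5*|θ j| := by
  have h1 : ell x θ ≤ ∑ k, |θ k| := ell_le_of_mem hx θ
  have h2 : -(θ i * x i ^ 2) ≤ |θ i| := by
    calc -(θ i * x i ^ 2) ≤ |θ i * x i ^2| := neg_le_abs _
      _ = |θ i| * x i ^2 := by rw [abs_mul, abs_of_nonneg (sq_nonneg (x i))]
      _ ≤ |θ i| * 1 := mul_le_mul_of_nonneg_left (sq_le_one_of_mem hx i) (abs_nonneg _)
      _ = |θ i| := mul_one _
  have h3 : -(θ j * x j ^ 2) ≤ |θ j| := by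
    calc -(θ j * x j ^ 2) ≤ |θ j * x j ^2| := neg_le_abs _
      _ = |θ j| * x j ^2 := by rw [abs_mul, abs_of_nonneg (sq_nonneg (x j))]
      _ ≤ |θ j| * 1 := mul_le_mul_of_nonneg_left (sq_le_one_of_mem hx j) (abs_nonneg _)
      _ = |θ j| := mul_one _
  have hu4 : uu i j x φ ^ 2 ≤ 4 := by
    have := abs_uu_le (i := i) (j := j) hx φ
    nlinarith [abs_nonneg (uu i j x φ), sq_abs (uu i j x φ)]
  have hv4 : vv i j x φ ^ 2 ≤ 4 := by
    have := abs_vv_le (i := i) (j := j) hx φ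
    nlinarith [abs_nonneg (vv i j x φ), sq_abs (vv i j x φ)]
  have h4 : θ i * uu i j x φ ^ 2 ≤ 4 * |θ i| := by
    calc θ i * uu i j x φ ^2 ≤ |θ i * uu i j x φ ^2| := le_abs_self _
      _ = |θ i| * uu i j x φ ^ 2 := by rw [abs_mul, abs_of_nonneg (sq_nonneg (uu i j x φ))]
      _ ≤ |θ i| * 4 := mul_le_mul_of_nonneg_left hu4 (abs_nonneg _)
      _ = 4 * |θ i| := mul_comm _ _
  have h5 : θ j * vv i j x φ ^ 2 ≤ 4 * |θ j| := by
    calc θ j * vv i j x φ ^2 ≤ |θ j * vv i j x φ ^2| := le_abs_self _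
      _ = |θ j| * vv i j x φ ^ 2 := by rw [abs_mul, abs_of_nonneg (sq_nonneg (vv i j x φ))]
      _ ≤ |θ j| * 4 := mul_le_mul_of_nonneg_left hv4 (abs_nonneg _)
      _ = 4 * |θ j| := mul_comm _ _
  rw [ffq]
  linarith

lemma abs_QD_le {θ : Fin p → ℝ} {x : EuclideanSpace ℝ (Fin p)} (hx : x ∈ Sph p) (φ : ℝ) :
    |QD θ i j x φ| ≤ (16*|θ i - θ j| + 64*(θ i - θ j)^2)
      * Real.exp ((∑ k, |θ k|) + 5*|θ i| + 5*|θ j|) := by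
  rw [QD, abs_mul, abs_of_nonneg (Real.exp_nonneg _)]
  refine mul_le_mul ?_ (Real.exp_le_exp.2 (ffq_le hx φ)) (Real.exp_nonneg _) (by positivity)
  · have hu4 : uu i j x φ ^ 2 ≤ 4 := by
      have := abs_uu_le (i := i) (j := j) hx φ
      nlinarith [abs_nonneg (uu i j x φ), sq_abs (uu i j x φ)]
    have hv4 : vv i j x φ ^ 2 ≤ 4 := by
      have := abs_vv_le (i := i) (j := j) hx φ
      nlinarith [abs_nonneg (vv i j x φ), sq_abs (vv i j x φ)]
    have h1 : |2*(θ i - θ j)*((vv i j x φ)^2 - (uu i j x φ)^2)| ≤ 16*|θ i - θ j| := by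
      rw [abs_mul, abs_mul]
      have hd : |(vv i j x φ)^2 - (uu i j x φ)^2| ≤ 8 := by
        rw [abs_sub_le_iff]
        constructor <;> nlinarith [sq_nonneg (uu i j x φ), sq_nonneg (vv i j x φ)]
      calc |(2:ℝ)| * |θ i - θ j| * |(vv i j x φ)^2 - (uu i j x φ)^2|
          ≤ 2 * |θ i - θ j| * 8 := by
            rw [abs_two]
            exact mul_le_mul_of_nonneg_left hd (by positivity)
        _ = 16*|θ i - θ j| := by ring
    have h2 : (2*(θ i - θ j)*(uu i j x φ * vv i j x φ))^2 ≤ 64*(θ i - θ j)^2 := by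
      have huv : (uu i j x φ * vv i j x φ)^2 ≤ 16 := by
        rw [mul_pow]
        calc uu i j x φ ^2 * vv i j x φ ^2 ≤ 4 * 4 :=
            mul_le_mul hu4 hv4 (sq_nonneg _) (by norm_num)
          _ = 16 := by norm_num
      calc (2*(θ i - θ j)*(uu i j x φ * vv i j x φ))^2
          = 4*(θ i - θ j)^2 * (uu i j x φ * vv i j x φ)^2 := by ring
        _ ≤ 4*(θ i - θ j)^2 * 16 := by
            exact mul_le_mul_of_nonneg_left huv (by positivity)
        _ = 64*(θ i - θ j)^2 := by ring
    calc |2*(θ i - θ j)*((vv i j x φ)^2 - (uu i j x φ)^2)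
          + (2*(θ i - θ j)*(uu i j x φ * vv i j x φ))^2|
        ≤ |2*(θ i - θ j)*((vv i j x φ)^2 - (uu i j x φ)^2)|
          + |(2*(θ i - θ j)*(uu i j x φ * vv i j x φ))^2| := abs_add_le _ _
      _ ≤ 16*|θ i - θ j| + 64*(θ i - θ j)^2 := by
          apply add_le_add h1
          rw [abs_of_nonneg (sq_nonneg _)]
          exact h2

lemma abs_Q_le {θ : Fin p → ℝ} {x : EuclideanSpace ℝ (Fin p)} (hx : x ∈ Sph p) (φ : ℝ) :
    |2*(θ i - θ j)*(uu i j x φ * vv i j x φ) * Real.exp (ffq θ i j x φ)|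
      ≤ (8*|θ i - θ j|) * Real.exp ((∑ k, |θ k|) + 5*|θ i| + 5*|θ j|) := by
  rw [abs_mul, abs_of_nonneg (Real.exp_nonneg _)]
  apply mul_le_mul _ (Real.exp_le_exp.2 (ffq_le hx φ)) (Real.exp_nonneg _) (by positivity)
  rw [abs_mul, abs_mul, abs_two, abs_mul]
  calc 2 * |θ i - θ j| * (|uu i j x φ| * |vv i j x φ|)
      ≤ 2 * |θ i - θ j| * (2 * 2) := by
        apply mul_le_mul_of_nonneg_left _ (by positivity)
        exact mul_le_mul (abs_uu_le hx φ) (abs_vv_le hx φ) (abs_nonneg _) (by norm_num)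
    _ = (8*|θ i - θ j|) := by ring

variable [IsFiniteMeasure (μB p)] in
lemma integral_QD_zero (hij : i ≠ j) (θ : Fin p → ℝ) :
    ∫ x, QD θ i j x 0 ∂(μB p) = 0 := by
  set M : ℝ := (∑ k, |θ k|) + 5*|θ i| + 5*|θ j| with hM
  have hder : HasDerivAt
      (fun φ => ∫ x, 2*(θ i - θ j)*(uu i j x φ * vv i j x φ) * Real.exp (ffq θ i j x φ) ∂(μB p))
      (∫ x, QD θ i j x 0 ∂(μB p)) 0 := by
    refine (hasDerivAt_integral_of_dominated_loc_of_deriv_le (𝕜 := ℝ) (μ := μB p)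
      (F := fun φ x => 2*(θ i - θ j)*(uu i j x φ * vv i j x φ) * Real.exp (ffq θ i j x φ))
      (F' := fun φ x => QD θ i j x φ)
      (bound := fun _ => (16*|θ i - θ j| + 64*(θ i - θ j)^2) * Real.exp M)
      (ball_mem_nhds 0 one_pos) ?_ ?_ ?_ ?_ ?_ ?_).2
    · exact Filter.Eventually.of_forall fun φ => (continuous_Q θ φ).aestronglyMeasurable
    · apply integrable_of_bound _ (continuous_Q θ 0) ((8*|θ i - θ j|) * Real.exp M)
      intro x hx
      exact abs_Q_le hx 0
    · exact (continuous_QD θ 0).aestronglyMeasurable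
    · apply ae_sph.mono
      intro x hx φ _
      exact abs_QD_le hx φ
    · exact integrable_const _
    · apply ae_sph.mono
      intro x _ φ _
      exact hasDerivAt_Q θ x φ
  rw [show (fun φ => ∫ x, 2*(θ i - θ j)*(uu i j x φ * vv i j x φ)
      * Real.exp (ffq θ i j x φ) ∂(μB p)) = (fun _ => (0:ℝ)) from
    funext (integral_Q_zero hij θ)] at hder
  exact hder.unique (hasDerivAt_const 0 0)

variable [IsFiniteMeasure (μB p)] in
lemma key_identity (hij : i ≠ j) (θ : Fin p → ℝ) (hθ : θ i ≠ θ j) :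
    ∫ x, x i^2 * x j^2 * Real.exp (ell x θ) ∂(μB p)
      = (∫ x, x i^2 * Real.exp (ell x θ) ∂(μB p)
        - ∫ x, x j^2 * Real.exp (ell x θ) ∂(μB p)) / (2*(θ i - θ j)) := by
  set Δ : ℝ := θ i - θ j with hΔdef
  have hΔ : Δ ≠ 0 := sub_ne_zero.2 hθ
  have hexp : Continuous fun x : EuclideanSpace ℝ (Fin p) => Real.exp (ell x θ) :=
    (continuous_ell.clm_apply continuous_const).rexp
  have hbexp : ∀ x ∈ Sph p, Real.exp (ell x θ) ≤ Real.exp (∑ k, |θ k|) :=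
    fun x hx => Real.exp_le_exp.2 (ell_le_of_mem hx θ)
  have hint : ∀ (c : EuclideanSpace ℝ (Fin p) → ℝ), Continuous c →
      (∀ x ∈ Sph p, |c x| ≤ 1) →
      Integrable (fun x => c x * Real.exp (ell x θ)) (μB p) := by
    intro c hc hb
    apply integrable_of_bound _ (hc.mul hexp) (Real.exp (∑ k, |θ k|))
    intro x hx
    rw [Real.norm_eq_abs, Pi.mul_apply, abs_mul, abs_of_nonneg (Real.exp_nonneg _)]
    calc |c x| * Real.exp (ell x θ) ≤ 1 * Real.exp (∑ k, |θ k|) :=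
        mul_le_mul (hb x hx) (hbexp x hx) (Real.exp_nonneg _) zero_le_one
      _ = _ := one_mul _
  have hinti : Integrable (fun x => x i ^2 * Real.exp (ell x θ)) (μB p) :=
    hint _ ((continuous_coord i).pow 2) (fun x hx => by
      rw [abs_of_nonneg (sq_nonneg _)]; exact sq_le_one_of_mem hx i)
  have hintj : Integrable (fun x => x j ^2 * Real.exp (ell x θ)) (μB p) :=
    hint _ ((continuous_coord j).pow 2) (fun x hx => by
      rw [abs_of_nonneg (sq_nonneg _)]; exact sq_le_one_of_mem hx j)
  have hintij : Integrable (fun x => x i ^2 * x j ^2 * Real.exp (ell x θ)) (μB p) :=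
    hint _ (((continuous_coord i).pow 2).mul ((continuous_coord j).pow 2)) (fun x hx => by
      rw [abs_of_nonneg (by positivity : (0:ℝ) ≤ x i ^2 * x j ^2)]
      calc x i ^2 * x j ^2 ≤ 1 * 1 :=
          mul_le_mul (sq_le_one_of_mem hx i) (sq_le_one_of_mem hx j) (sq_nonneg _) zero_le_one
        _ = 1 := one_mul _)
  have hQD0 : ∀ x : EuclideanSpace ℝ (Fin p), QD θ i j x 0
      = 2*Δ*(x j^2 * Real.exp (ell x θ)) - 2*Δ*(x i^2 * Real.exp (ell x θ))
        + 4*Δ^2*(x i^2 * x j^2 * Real.exp (ell x θ)) := by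
    intro x
    rw [QD, uu_zero, vv_zero, ffq_zero]
    ring
  have hzero := integral_QD_zero hij θ
  rw [show (fun x : EuclideanSpace ℝ (Fin p) => QD θ i j x 0) = _ from funext hQD0] at hzero
  have h1 : Integrable (fun x : EuclideanSpace ℝ (Fin p) =>
      2*Δ*(x j^2 * Real.exp (ell x θ)) - 2*Δ*(x i^2 * Real.exp (ell x θ))) (μB p) :=
    (hintj.const_mul _).sub (hinti.const_mul _)
  rw [integral_add h1 (hintij.const_mul _),
    integral_sub (hintj.const_mul _) (hinti.const_mul _),
    integral_const_mul, integral_const_mul, integral_const_mul] at hzero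
  field_simp
  have h2 : 2*Δ*((∫ x, x i^2 * x j^2 * Real.exp (ell x θ) ∂(μB p))*(2*Δ)
      - ((∫ x, x i^2 * Real.exp (ell x θ) ∂(μB p))
        - ∫ x, x j^2 * Real.exp (ell x θ) ∂(μB p))) = 0 := by
    linear_combination hzero
  have h4 : (2*Δ) ≠ 0 := mul_ne_zero two_ne_zero hΔ
  have h5 := (mul_eq_zero.1 h2).resolve_left h4
  linarith


end BinghamAux
end

open BinghamAux

/-- Euler–Darboux equations for the Bingham normalising constant: for `i < j`
and `θ_i ≠ θ_j`, `∂_i ∂_j C = (∂_i C − ∂_j C)/(2(θ_i − θ_j))`. -/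
theorem bingham_euler_darboux (p : ℕ) (hp : 2 ≤ p) (i j : Fin p) (hij : i < j)
    (θ : Fin p → ℝ) (hθ : θ i ≠ θ j) :
    fderiv ℝ (fun t => fderiv ℝ (binghamC p) t (Pi.single j 1)) θ (Pi.single i 1)
      = (fderiv ℝ (binghamC p) θ (Pi.single i 1)
          - fderiv ℝ (binghamC p) θ (Pi.single j 1)) / (2 * (θ i - θ j)) := by
  have hij' : i ≠ j := ne_of_lt hij
  haveI hfin : IsFiniteMeasure (μB p) := by
    constructor
    rw [μB, Measure.restrict_apply_univ]
    obtain ⟨n, rfl⟩ : ∃ n, p = n + 1 := ⟨p - 1, by omega⟩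
    exact finite_sphere n
  have hCfun : binghamC p = fun t => ∫ x, (1:ℝ) * Real.exp (ell x t) ∂(μB p) := by
    funext t
    rw [binghamC, μB]
    refine integral_congr_ae (ae_of_all _ fun x => ?_)
    show Real.exp (∑ k, t k * x k ^ 2) = 1 * Real.exp (ell x t)
    rw [one_mul, ell_apply]
    congr 1
    exact Finset.sum_congr rfl fun k _ => mul_comm _ _
  have hfd : ∀ (t : Fin p → ℝ) (m : Fin p), fderiv ℝ (binghamC p) t (Pi.single m 1)
      = ∫ x, x m ^ 2 * Real.exp (ell x t) ∂(μB p) := by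
    intro t m
    rw [hCfun]
    calc fderiv ℝ (fun t => ∫ x, (1:ℝ) * Real.exp (ell x t) ∂(μB p)) t (Pi.single m 1)
        = ∫ x, (1:ℝ) * Real.exp (ell x t) * x m ^ 2 ∂(μB p) :=
          fderiv_param_single (fun _ => (1:ℝ)) continuous_const (fun x _ => by norm_num) t m
      _ = ∫ x, x m ^ 2 * Real.exp (ell x t) ∂(μB p) :=
          integral_congr_ae (ae_of_all _ fun x => by ring)
  have hLfun : (fun t => fderiv ℝ (binghamC p) t (Pi.single j 1))
      = fun t => ∫ x, x j ^ 2 * Real.exp (ell x t) ∂(μB p) := funext fun t => hfd t j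
  rw [hLfun, hfd θ i, hfd θ j]
  have hL : fderiv ℝ (fun t => ∫ x, x j ^ 2 * Real.exp (ell x t) ∂(μB p)) θ (Pi.single i 1)
      = ∫ x, (x j ^ 2 * Real.exp (ell x θ)) * x i ^ 2 ∂(μB p) :=
    fderiv_param_single (fun x => x j ^ 2) ((continuous_coord j).pow 2)
      (fun x hx => by rw [abs_of_nonneg (sq_nonneg _)]; exact sq_le_one_of_mem hx j) θ i
  rw [hL]
  have heq : ∫ x, (x j ^ 2 * Real.exp (ell x θ)) * x i ^ 2 ∂(μB p)
      = ∫ x, x i ^ 2 * x j ^ 2 * Real.exp (ell x θ) ∂(μB p) :=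
    integral_congr_ae (ae_of_all _ fun x => by ring)
  rw [heq, key_identity hij' θ hθ]
end

section
/- Let Θ ⊆ ℝ^d be open and ℓ : Θ → ℝ twice continuously differentiable. Suppose θ̄ : [0,1) → Θ is differentiable, the Hessian matrix Hess ℓ(θ̄(τ)) is invertible for all τ ∈ [0,1), and θ̄ solves the continuous Newton–Raphson equation dθ̄/dτ = −(1−τ)^{-1} [Hess ℓ(θ̄(τ))]^{-1} grad ℓ(θ̄(τ)) for 0 ≤ τ < 1. Then grad ℓ(θ̄(τ)) = (1−τ) · grad ℓ(θ̄(0)) for all τ ∈ [0,1); in particular grad ℓ(θ̄(τ)) → 0 as τ → 1. -/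
open MeasureTheory

/-- The continuous-time Newton–Raphson flow
`dθ̄/dτ = −(1−τ)⁻¹ [Hess ℓ(θ̄)]⁻¹ grad ℓ(θ̄)` satisfies
`grad ℓ(θ̄(τ)) = (1−τ) grad ℓ(θ̄(0))` on `[0,1)`; in particular
`grad ℓ(θ̄(τ)) → 0` as `τ → 1`. -/
theorem continuous_newton_raphson (d : ℕ) (Θ : Set (Fin d → ℝ)) (hΘ : IsOpen Θ)
    (ℓ : (Fin d → ℝ) → ℝ) (hℓ : ContDiffOn ℝ 2 ℓ Θ)
    (gradℓ : (Fin d → ℝ) → (Fin d → ℝ))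
    (Hessℓ : (Fin d → ℝ) → Matrix (Fin d) (Fin d) ℝ)
    (hgrad : ∀ t i, gradℓ t i = fderiv ℝ ℓ t (Pi.single i 1))
    (hHess : ∀ t i j, Hessℓ t i j
      = fderiv ℝ (fun u => fderiv ℝ ℓ u (Pi.single j 1)) t (Pi.single i 1))
    (θbar : ℝ → (Fin d → ℝ)) (θ' : ℝ → (Fin d → ℝ))
    (hmap : ∀ τ ∈ Set.Ico (0 : ℝ) 1, θbar τ ∈ Θ)
    (hcurve : ∀ τ ∈ Set.Ico (0 : ℝ) 1, HasDerivAt θbar (θ' τ) τ)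
    (hinv : ∀ τ ∈ Set.Ico (0 : ℝ) 1, IsUnit (Hessℓ (θbar τ)))
    (hode : ∀ τ ∈ Set.Ico (0 : ℝ) 1,
      θ' τ = -(1 - τ)⁻¹ • (Hessℓ (θbar τ))⁻¹.mulVec (gradℓ (θbar τ))) :
    (∀ τ ∈ Set.Ico (0 : ℝ) 1, gradℓ (θbar τ) = (1 - τ) • gradℓ (θbar 0))
    ∧ Filter.Tendsto (fun τ => gradℓ (θbar τ))
        (nhdsWithin 1 (Set.Iio 1)) (nhds 0) := by
  classical
  -- second derivative facts
  have hB : ∀ x ∈ Θ, HasFDerivAt (fderiv ℝ ℓ) (fderiv ℝ (fderiv ℝ ℓ) x) x := by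
    intro x hx
    have h2 : ContDiffAt ℝ 2 ℓ x := hℓ.contDiffAt (hΘ.mem_nhds hx)
    have h1 : ContDiffAt ℝ 1 (fderiv ℝ ℓ) x := h2.fderiv_right (by norm_num)
    exact (h1.differentiableAt (by norm_num)).hasFDerivAt
  have hev : ∀ x ∈ Θ, ∀ᶠ y in nhds x, HasFDerivAt ℓ (fderiv ℝ ℓ y) y := by
    intro x hx
    filter_upwards [hΘ.mem_nhds hx] with y hy
    exact ((hℓ.contDiffAt (hΘ.mem_nhds hy)).differentiableAt (by norm_num)).hasFDerivAt
  have hφ : ∀ x ∈ Θ, ∀ j : Fin d,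
      HasFDerivAt (fun u => fderiv ℝ ℓ u (Pi.single j 1))
        ((ContinuousLinearMap.apply ℝ ℝ ((Pi.single j 1 : Fin d → ℝ))).comp
          (fderiv ℝ (fderiv ℝ ℓ) x)) x := by
    intro x hx j
    exact (ContinuousLinearMap.apply ℝ ℝ (Pi.single j 1)).hasFDerivAt.comp x (hB x hx)
  have hHessEntry : ∀ x ∈ Θ, ∀ i j, Hessℓ x i j
      = fderiv ℝ (fderiv ℝ ℓ) x (Pi.single i 1) (Pi.single j 1) := by
    intro x hx i j
    rw [hHess, (hφ x hx j).fderiv]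
    rfl
  have hsymm : ∀ x ∈ Θ, ∀ i j, Hessℓ x i j = Hessℓ x j i := by
    intro x hx i j
    rw [hHessEntry x hx i j, hHessEntry x hx j i]
    exact second_derivative_symmetric_of_eventually (hev x hx) (hB x hx) _ _
  -- expand a linear functional over the basis
  have hexp : ∀ (L : (Fin d → ℝ) →L[ℝ] ℝ) (w : Fin d → ℝ),
      L w = ∑ i, w i * L (Pi.single i 1) := by
    intro L w
    have hw : w = ∑ i, w i • (Pi.single i 1 : Fin d → ℝ) := by
      funext k
      rw [Finset.sum_apply]
      simp [Pi.single_apply]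
    conv_lhs => rw [hw]
    rw [map_sum]
    simp [smul_eq_mul]
  -- derivative of the gradient along the curve
  have hgderiv : ∀ τ ∈ Set.Ico (0:ℝ) 1, ∀ j,
      HasDerivAt (fun s => gradℓ (θbar s) j) (-(1 - τ)⁻¹ * gradℓ (θbar τ) j) τ := by
    intro τ hτ j
    have hx := hmap τ hτ
    have hcomp := (hφ _ hx j).comp_hasDerivAt τ (hcurve τ hτ)
    have hfun : (fun s => gradℓ (θbar s) j)
        = fun s => fderiv ℝ ℓ (θbar s) (Pi.single j 1) := funext fun s => hgrad _ j
    rw [hfun]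
    refine hcomp.congr_deriv (Eq.symm ?_)
    -- value of the derivative
    have hval : ((ContinuousLinearMap.apply ℝ ℝ ((Pi.single j 1 : Fin d → ℝ))).comp
          (fderiv ℝ (fderiv ℝ ℓ) (θbar τ))) (θ' τ)
        = ∑ i, θ' τ i * Hessℓ (θbar τ) i j := by
      rw [hexp _ (θ' τ)]
      refine Finset.sum_congr rfl fun i _ => ?_
      rw [hHessEntry _ hx i j]
      rfl
    rw [hval]
    have hmv : ∑ i, θ' τ i * Hessℓ (θbar τ) i j = (Hessℓ (θbar τ)).mulVec (θ' τ) j := by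
      simp only [Matrix.mulVec, dotProduct]
      refine Finset.sum_congr rfl fun i _ => ?_
      rw [hsymm _ hx i j]
      ring
    rw [hmv, hode τ hτ, Matrix.mulVec_smul, Matrix.mulVec_mulVec,
      Matrix.mul_nonsing_inv _ ((Matrix.isUnit_iff_isUnit_det _).mp (hinv τ hτ)),
      Matrix.one_mulVec]
    simp
  -- the key identity
  have key : ∀ τ ∈ Set.Ico (0:ℝ) 1, gradℓ (θbar τ) = (1 - τ) • gradℓ (θbar 0) := by
    intro τ hτ
    funext j
    have hF : ∀ s ∈ Set.Ico (0:ℝ) 1,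
        HasDerivAt (fun u => (1-u)⁻¹ * gradℓ (θbar u) j) 0 s := by
      intro s hs
      have h1s : (1 : ℝ) - s ≠ 0 := by
        have := hs.2; intro h; linarith [sub_eq_zero.mp h]
      have h0 : HasDerivAt (fun u : ℝ => 1 - u) (-1) s := by
        simpa using (hasDerivAt_id s).const_sub 1
      have hinvd : HasDerivAt (fun u : ℝ => (1-u)⁻¹) (-(-1) / (1-s)^2) s := h0.inv h1s
      have hprod := hinvd.mul (hgderiv s hs j)
      refine hprod.congr_deriv (Eq.symm ?_)
      field_simp
      ring
    have hcont : ContinuousOn (fun u => (1-u)⁻¹ * gradℓ (θbar u) j) (Set.Icc 0 τ) := by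
      intro s hs
      exact (hF s ⟨hs.1, lt_of_le_of_lt hs.2 hτ.2⟩).continuousAt.continuousWithinAt
    have hc := constant_of_has_deriv_right_zero hcont (fun s hs =>
      (hF s ⟨hs.1, lt_trans hs.2 hτ.2⟩).hasDerivWithinAt) τ (Set.right_mem_Icc.mpr hτ.1)
    have h1τ : (1 : ℝ) - τ ≠ 0 := by
      have := hτ.2; intro h; linarith [sub_eq_zero.mp h]
    have : (1-τ)⁻¹ * gradℓ (θbar τ) j = gradℓ (θbar 0) j := by simpa using hc
    rw [Pi.smul_apply, smul_eq_mul, ← this]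
    field_simp
  refine ⟨key, ?_⟩
  have hlim : Filter.Tendsto (fun τ : ℝ => (1 - τ) • gradℓ (θbar 0))
      (nhdsWithin 1 (Set.Iio 1)) (nhds 0) := by
    have h1 : Filter.Tendsto (fun τ : ℝ => (1 - τ) • gradℓ (θbar 0)) (nhds 1)
        (nhds (((1:ℝ) - 1) • gradℓ (θbar 0))) :=
      Filter.Tendsto.smul_const (tendsto_const_nhds.sub Filter.tendsto_id) _
    simpa using h1.mono_left nhdsWithin_le_nhds
  refine hlim.congr' ?_
  have hmem : Set.Ico (0:ℝ) 1 ∈ nhdsWithin 1 (Set.Iio 1) := by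
    refine Filter.mem_of_superset (Filter.inter_mem
      (mem_nhdsWithin_of_mem_nhds (Ioi_mem_nhds one_pos)) self_mem_nhdsWithin) ?_
    rintro x ⟨hx1, hx2⟩
    exact ⟨le_of_lt hx1, hx2⟩
  filter_upwards [hmem] with τ hτ
  exact (key τ hτ).symm
end

section
/- Let C(θ) be the Bingham normalising constant and s ∈ ℝ^p with all s_i > 0, and define ℓ(θ) = ∑_{i=1}^p θ_i s_i − log C(θ). Suppose θ̂ ∈ ℝ^p is a maximum likelihood estimate which is unique up to the redundancy, i.e. every maximizer of ℓ equals θ̂ + c·1_p for some c ∈ ℝ, and θ̂ satisfies the likelihood equations ∂ log C/∂θ_i (θ̂) = s_i for all i. Then for all indices i, j: if s_i < s_j then θ̂_i < θ̂_j, and if s_i = s_j then θ̂_i = θ̂_j. In particular, if s = (σ_1,…,σ_1,…,σ_q,…,σ_q) with σ_1 < ⋯ < σ_q and σ_i occurring d_i times, then θ̂ = (φ̂_1,…,φ̂_1,…,φ̂_q,…,φ̂_q) with φ̂_1 < ⋯ < φ̂_q and the same multiplicities. -/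
open MeasureTheory

lemma binghamC_perm (p : ℕ) (τ : Equiv.Perm (Fin p)) (θ : Fin p → ℝ) :
    binghamC p (fun k => θ (τ k)) = binghamC p θ := by
  classical
  set S : Set (EuclideanSpace ℝ (Fin p)) := {x | ‖x‖ = 1} with hS
  set F := LinearIsometryEquiv.piLpCongrLeft 2 ℝ ℝ τ with hFdef
  have hMP : MeasurePreserving F μH[(p : ℝ) - 1] μH[(p : ℝ) - 1] :=
    F.toIsometryEquiv.measurePreserving_hausdorffMeasure _
  have hemb : MeasurableEmbedding F := F.toHomeomorph.measurableEmbedding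
  have hpre : F ⁻¹' S = S := by
    ext x; simp [hS, Set.mem_preimage, F.norm_map]
  have hmain := hMP.setIntegral_preimage_emb hemb
    (fun y : EuclideanSpace ℝ (Fin p) => Real.exp (∑ i, θ i * y i ^ 2)) S
  rw [hpre] at hmain
  have hmeas : MeasurableSet S :=
    (isClosed_eq continuous_norm continuous_const).measurableSet
  have hstep : (∫ x in S, Real.exp (∑ k, θ (τ k) * x k ^ 2) ∂ μH[(p : ℝ) - 1])
      = ∫ x in S, Real.exp (∑ i, θ i * (F x) i ^ 2) ∂ μH[(p : ℝ) - 1] := by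
    refine setIntegral_congr_fun hmeas fun x _ => congrArg Real.exp ?_
    have hFx : ∀ k, (F x) k = x (τ.symm k) := fun k => rfl
    calc ∑ k, θ (τ k) * x k ^ 2
        = ∑ k, θ (τ k) * x (τ.symm (τ k)) ^ 2 :=
          Finset.sum_congr rfl fun k _ => by rw [Equiv.symm_apply_apply]
      _ = ∑ k, θ k * x (τ.symm k) ^ 2 := Equiv.sum_comp τ (fun k => θ k * x (τ.symm k) ^ 2)
      _ = ∑ k, θ k * (F x) k ^ 2 := Finset.sum_congr rfl fun k _ => by rw [hFx]
  rw [binghamC, binghamC, hstep]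
  exact hmain

/-- Permutation of coordinates as a continuous linear equiv of `Fin p → ℝ`. -/
noncomputable def permCLE (p : ℕ) (τ : Equiv.Perm (Fin p)) : (Fin p → ℝ) ≃L[ℝ] (Fin p → ℝ) where
  toLinearEquiv :=
  { toFun := fun v k => v (τ k)
    invFun := fun v k => v (τ.symm k)
    map_add' := fun _ _ => rfl
    map_smul' := fun _ _ => rfl
    left_inv := fun v => by funext k; simp
    right_inv := fun v => by funext k; simp }
  continuous_toFun := continuous_pi fun k => continuous_apply (τ k)
  continuous_invFun := continuous_pi fun k => continuous_apply (τ.symm k)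

lemma permCLE_apply (p : ℕ) (τ : Equiv.Perm (Fin p)) (v : Fin p → ℝ) (k : Fin p) :
    permCLE p τ v k = v (τ k) := rfl


/-- Order preservation of the Bingham MLE (Lemma 3 of the paper): if all
sufficient statistics `s_i` are positive, `θ̂` maximises the log-likelihood
`ℓ(θ) = ∑ θ_i s_i − log C(θ)`, every maximiser equals `θ̂ + c·1_p` for some
`c`, and `θ̂` solves the likelihood equations `∂_i log C(θ̂) = s_i`, then
`s_i < s_j` implies `θ̂_i < θ̂_j` and `s_i = s_j` implies `θ̂_i = θ̂_j`
(so `θ̂` has exactly the same ordering and multiplicities as `s`). -/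
theorem bingham_mle_order (p : ℕ) (hp : 2 ≤ p)
    (s : Fin p → ℝ) (hs : ∀ i, 0 < s i)
    (ℓ : (Fin p → ℝ) → ℝ)
    (hℓ : ∀ θ, ℓ θ = (∑ i, θ i * s i) - Real.log (binghamC p θ))
    (θhat : Fin p → ℝ)
    (hmax : ∀ θ, ℓ θ ≤ ℓ θhat)
    (huniq : ∀ θ, (∀ t, ℓ t ≤ ℓ θ) → ∃ c : ℝ, θ = fun i => θhat i + c)
    (hlik : ∀ i, fderiv ℝ (fun t => Real.log (binghamC p t)) θhat (Pi.single i 1)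
      = s i) :
    ∀ i j : Fin p,
      (s i < s j → θhat i < θhat j) ∧ (s i = s j → θhat i = θhat j) := by
  classical
  -- the log-normalising-constant function
  set f : (Fin p → ℝ) → ℝ := fun t => Real.log (binghamC p t) with hf
  -- key computation: value of ℓ at a swapped parameter
  have key : ∀ i j : Fin p, i ≠ j →
      ℓ (fun k => θhat (Equiv.swap i j k))
        = ℓ θhat - (θhat i - θhat j) * (s i - s j) := by
    intro i j hij
    have hsum : ∑ k, θhat k * s k - ∑ k, θhat (Equiv.swap i j k) * s k
        = (θhat i - θhat j) * (s i - s j) := by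
      rw [← Finset.sum_sub_distrib]
      have hzero : ∀ k ∈ Finset.univ, k ∉ ({i, j} : Finset (Fin p)) →
          θhat k * s k - θhat (Equiv.swap i j k) * s k = 0 := by
        intro k _ hk
        simp only [Finset.mem_insert, Finset.mem_singleton, not_or] at hk
        rw [Equiv.swap_apply_of_ne_of_ne hk.1 hk.2]
        ring
      rw [← Finset.sum_subset (Finset.subset_univ ({i, j} : Finset (Fin p))) hzero]
      rw [Finset.sum_pair hij, Equiv.swap_apply_left, Equiv.swap_apply_right]
      ring
    have hC : binghamC p (fun k => θhat (Equiv.swap i j k)) = binghamC p θhat :=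
      binghamC_perm p (Equiv.swap i j) θhat
    rw [hℓ, hℓ, hC]
    linarith [hsum]
  -- if the statistics agree, the parameters agree
  have heq : ∀ i j : Fin p, s i = s j → θhat i = θhat j := by
    intro i j hsij
    by_cases hij : i = j
    · rw [hij]
    · have hswap := key i j hij
      rw [hsij] at hswap
      simp only [sub_self, mul_zero, sub_zero] at hswap
      have hm : ∀ t, ℓ t ≤ ℓ (fun k => θhat (Equiv.swap i j k)) := by
        intro t; rw [hswap]; exact hmax t
      obtain ⟨c, hc⟩ := huniq _ hm
      have hsum2 : ∑ k, θhat (Equiv.swap i j k) = ∑ k, (θhat k + c) := by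
        rw [← hc]
      have hsum3 : ∑ k, θhat (Equiv.swap i j k) = ∑ k, θhat k :=
        Equiv.sum_comp (Equiv.swap i j) θhat
      rw [hsum3, Finset.sum_add_distrib, Finset.sum_const, Finset.card_univ,
        Fintype.card_fin, nsmul_eq_mul] at hsum2
      have hc0 : c = 0 := by
        have hp0 : 0 < (p : ℝ) := by positivity
        have : (p : ℝ) * c = 0 := by linarith [hsum2]
        exact (mul_eq_zero.mp this).resolve_left (ne_of_gt hp0)
      have := congrFun hc i
      rw [Equiv.swap_apply_left, hc0, add_zero] at this
      exact this.symm
  -- if the parameters agree, the statistics agree (via the likelihood equations)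
  have hder : ∀ i j : Fin p, θhat i = θhat j → s i = s j := by
    intro i j hθij
    by_cases hij : i = j
    · rw [hij]
    · set τ := Equiv.swap i j with hτ
      set E := permCLE p τ with hE
      -- f ∘ E = f
      have hcomp : (f ∘ E) = f := by
        funext t
        have : binghamC p (E t) = binghamC p t := by
          have : (E t) = fun k => t (τ k) := rfl
          rw [this]
          exact binghamC_perm p τ t
        simp only [Function.comp_apply, hf, this]
      -- E fixes θhat
      have hfix : E θhat = θhat := by
        funext k
        rw [permCLE_apply]
        rcases eq_or_ne k i with rfl | hki
        · rw [hτ, Equiv.swap_apply_left]; exact hθij.symm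
        · rcases eq_or_ne k j with rfl | hkj
          · rw [hτ, Equiv.swap_apply_right]; exact hθij
          · rw [hτ, Equiv.swap_apply_of_ne_of_ne hki hkj]
      -- E maps e_i to e_j
      have hsingle : E (Pi.single i 1) = Pi.single j 1 := by
        funext k
        rw [permCLE_apply]
        rcases eq_or_ne k j with rfl | hkj
        · rw [hτ, Equiv.swap_apply_right, Pi.single_eq_same, Pi.single_eq_same]
        · have hτk : τ k ≠ i := by
            intro h
            apply hkj
            have := congrArg τ h
            rwa [Equiv.swap_apply_self, hτ, Equiv.swap_apply_left] at this
          rw [Pi.single_eq_of_ne hτk, Pi.single_eq_of_ne hkj]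
      by_cases hdiff : DifferentiableAt ℝ f θhat
      · -- use the chain rule for the linear equivalence
        have h1 : HasFDerivAt f (fderiv ℝ f θhat) θhat := hdiff.hasFDerivAt
        have h2 : HasFDerivAt (f ∘ E) ((fderiv ℝ f θhat).comp
            (E : (Fin p → ℝ) →L[ℝ] (Fin p → ℝ))) θhat := by
          refine (E.comp_right_hasFDerivAt_iff).mpr ?_
          rw [hfix]; exact h1
        rw [hcomp] at h2
        have h3 : fderiv ℝ f θhat = (fderiv ℝ f θhat).comp
            (E : (Fin p → ℝ) →L[ℝ] (Fin p → ℝ)) := by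
          exact h1.unique h2
        rw [← hlik i, ← hlik j]
        conv_lhs => rw [h3]
        simp only [ContinuousLinearMap.comp_apply, ContinuousLinearEquiv.coe_coe, hsingle]
      · -- if not differentiable, the fderiv is 0, contradicting positivity of s
        exfalso
        have : fderiv ℝ f θhat = 0 := fderiv_zero_of_not_differentiableAt hdiff
        have hsi := hlik i
        rw [← hf] at *
        rw [this] at hsi
        simp at hsi
        exact absurd hsi.symm (ne_of_gt (hs i))
  -- conclude
  intro i j
  constructor
  · intro hsij
    have hij : i ≠ j := fun h => by rw [h] at hsij; exact lt_irrefl _ hsij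
    have hle : θhat i ≤ θhat j := by
      have h1 := hmax (fun k => θhat (Equiv.swap i j k))
      rw [key i j hij] at h1
      nlinarith
    rcases lt_or_eq_of_le hle with h | h
    · exact h
    · exact absurd (hder i j h) (ne_of_lt hsij)
  · exact heq i j
end

section
/- For any real numbers a_1,…,a_q > 0 and any natural numbers k_1,…,k_q, the Gamma-function ratio satisfies (∏_{i=1}^q Γ(k_i + a_i)) / Γ(∑_{i=1}^q (k_i + a_i)) ≤ (∏_{i=1}^q Γ(a_i)) / Γ(∑_{i=1}^q a_i); equivalently, the coefficient (∏_i Γ(k_i + a_i) / Γ(∑_i (k_i + a_i))) · (Γ(∑_i a_i) / ∏_i Γ(a_i)) is at most 1. -/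
/-- Gamma-function ratio inequality: for `a_1,…,a_q > 0` and natural numbers
`k_1,…,k_q`,
`(∏_i Γ(k_i + a_i))/Γ(∑_i (k_i + a_i)) ≤ (∏_i Γ(a_i))/Γ(∑_i a_i)`. -/
theorem gamma_ratio_le (q : ℕ) (a : Fin q → ℝ) (ha : ∀ i, 0 < a i)
    (k : Fin q → ℕ) :
    (∏ i, Real.Gamma ((k i : ℝ) + a i)) / Real.Gamma (∑ i, ((k i : ℝ) + a i))
      ≤ (∏ i, Real.Gamma (a i)) / Real.Gamma (∑ i, a i) := by
  rcases Nat.eq_zero_or_pos q with hq | hq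
  · subst hq; simp
  have hne : (Finset.univ : Finset (Fin q)).Nonempty := by
    have : Nonempty (Fin q) := Fin.pos_iff_nonempty.mp hq
    exact Finset.univ_nonempty
  suffices H : ∀ n (k : Fin q → ℕ), ∑ i, k i = n →
      (∏ i, Real.Gamma ((k i : ℝ) + a i)) / Real.Gamma (∑ i, ((k i : ℝ) + a i))
      ≤ (∏ i, Real.Gamma (a i)) / Real.Gamma (∑ i, a i) from H _ k rfl
  intro n
  induction n with
  | zero =>
    intro k hk
    have h0 : ∀ i, k i = 0 := by
      intro i
      have := Finset.sum_eq_zero_iff.mp hk i (Finset.mem_univ i)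
      exact this
    simp [h0]
  | succ n ih =>
    intro k hk
    have hex : ∃ i, 0 < k i := by
      by_contra h
      push_neg at h
      simp only [Nat.le_zero] at h
      simp [h] at hk
    obtain ⟨i, hi⟩ := hex
    set k' : Fin q → ℕ := Function.update k i (k i - 1) with hk'def
    have hki : k i = k' i + 1 := by
      simp only [hk'def, Function.update_self]
      omega
    have hkj : ∀ j, j ≠ i → k j = k' j := fun j hj =>
      (Function.update_of_ne hj _ _).symm
    have hsum : ∑ j, k' j = n := by
      have h1 : ∑ j, k j = k i + ∑ j ∈ Finset.univ.erase i, k j :=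
        (Finset.add_sum_erase _ _ (Finset.mem_univ i)).symm
      have h2 : ∑ j, k' j = k' i + ∑ j ∈ Finset.univ.erase i, k' j :=
        (Finset.add_sum_erase _ _ (Finset.mem_univ i)).symm
      have h3 : ∑ j ∈ Finset.univ.erase i, k j = ∑ j ∈ Finset.univ.erase i, k' j :=
        Finset.sum_congr rfl fun j hj => hkj j (Finset.ne_of_mem_erase hj)
      omega
    have hpos : ∀ j, 0 < (k' j : ℝ) + a j := fun j => by
      have := ha j; positivity
    have hS' : 0 < ∑ j, ((k' j : ℝ) + a j) :=
      Finset.sum_pos (fun j _ => hpos j) hne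
    have hsum2 : ∑ j, ((k j : ℝ) + a j) = (∑ j, ((k' j : ℝ) + a j)) + 1 := by
      have h1 : ∑ j, ((k j : ℝ) + a j)
          = ((k i : ℝ) + a i) + ∑ j ∈ Finset.univ.erase i, ((k j : ℝ) + a j) :=
        (Finset.add_sum_erase _ _ (Finset.mem_univ i)).symm
      have h2 : ∑ j, ((k' j : ℝ) + a j)
          = ((k' i : ℝ) + a i) + ∑ j ∈ Finset.univ.erase i, ((k' j : ℝ) + a j) :=
        (Finset.add_sum_erase _ _ (Finset.mem_univ i)).symm
      have h3 : ∑ j ∈ Finset.univ.erase i, ((k j : ℝ) + a j)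
          = ∑ j ∈ Finset.univ.erase i, ((k' j : ℝ) + a j) :=
        Finset.sum_congr rfl fun j hj => by rw [hkj j (Finset.ne_of_mem_erase hj)]
      rw [h1, h2, h3, hki]
      push_cast
      ring
    have hprod : ∏ j, Real.Gamma ((k j : ℝ) + a j)
        = ((k' i : ℝ) + a i) * ∏ j, Real.Gamma ((k' j : ℝ) + a j) := by
      rw [← Finset.mul_prod_erase Finset.univ (fun j => Real.Gamma ((k j : ℝ) + a j))
            (Finset.mem_univ i),
          ← Finset.mul_prod_erase Finset.univ (fun j => Real.Gamma ((k' j : ℝ) + a j))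
            (Finset.mem_univ i)]
      have h3 : ∏ j ∈ Finset.univ.erase i, Real.Gamma ((k j : ℝ) + a j)
          = ∏ j ∈ Finset.univ.erase i, Real.Gamma ((k' j : ℝ) + a j) :=
        Finset.prod_congr rfl fun j hj => by rw [hkj j (Finset.ne_of_mem_erase hj)]
      rw [h3, hki]
      push_cast
      rw [show ((k' i : ℝ) + 1 + a i) = ((k' i : ℝ) + a i) + 1 by ring,
        Real.Gamma_add_one (ne_of_gt (hpos i))]
      ring
    rw [hsum2, hprod, Real.Gamma_add_one (ne_of_gt hS')]
    have hc : ((k' i : ℝ) + a i) ≤ ∑ j, ((k' j : ℝ) + a j) :=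
      Finset.single_le_sum (fun j _ => (hpos j).le) (Finset.mem_univ i)
    have hP : 0 ≤ ∏ j, Real.Gamma ((k' j : ℝ) + a j) :=
      Finset.prod_nonneg fun j _ => (Real.Gamma_pos_of_pos (hpos j)).le
    have hΓS : 0 < Real.Gamma (∑ j, ((k' j : ℝ) + a j)) := Real.Gamma_pos_of_pos hS'
    have key : (((k' i : ℝ) + a i) * ∏ j, Real.Gamma ((k' j : ℝ) + a j)) /
        ((∑ j, ((k' j : ℝ) + a j)) * Real.Gamma (∑ j, ((k' j : ℝ) + a j)))
        ≤ (∏ j, Real.Gamma ((k' j : ℝ) + a j)) / Real.Gamma (∑ j, ((k' j : ℝ) + a j)) := by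
      rw [mul_div_mul_comm]
      exact mul_le_of_le_one_left (div_nonneg hP hΓS.le)
        ((div_le_one hS').mpr hc)
    exact key.trans (ih k' hsum)
end
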